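/- Let X_ε be an ε-unfair cover such that for every color h the quantity (1+ε)·f_h·|X_ε| is a nonnegative integer and the family 𝒮_h \ X_ε contains at least (1+ε)·f_h·|X_ε| − |X_ε ∩ 𝒮_h| sets. Then there exists a fair cover X′ with X_ε ⊆ X′ and |X′| = (1+ε)·|X_ε|. In particular, the minimum size of a fair cover of (U, 𝒮) is at most (1+ε)·|X_ε|. -/

import Mathlib

/-- Key claim of Theorem 6.1 (padding an ε-unfair cover).  Set system with `k`
colors and prescribed nonnegative ratios `f h` summing to 1.  A fair cover `X`
satisfies `|X ∩ 𝒮_h| = f h · |X|` for every color; an ε-unfair cover satisfies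
`(1-ε) f h |X| ≤ |X ∩ 𝒮_h| ≤ (1+ε) f h |X|`.  If `Xε` is an ε-unfair cover
such that for every color `(1+ε)·f h·|Xε|` is a nonnegative integer and
`𝒮_h \ Xε` has at least `(1+ε)·f h·|Xε| − |Xε ∩ 𝒮_h|` sets, then there is a
fair cover `X′ ⊇ Xε` with `|X′| = (1+ε)·|Xε|`; in particular, the minimum fair
cover size is at most `(1+ε)·|Xε|`. -/
theorem stmt_11 {V ι : Type*} [DecidableEq V] [Fintype ι] [DecidableEq ι]
    (U : Finset V) (k : ℕ) (S : ι → Finset V) (color : ι → Fin k)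
    (hUnion : Finset.univ.biUnion S = U)
    (f : Fin k → ℝ) (hf0 : ∀ h, 0 ≤ f h) (hf1 : ∑ h, f h = 1)
    (ε : ℝ) (hε0 : 0 < ε) (hε1 : ε < 1)
    (Xε : Finset ι) (hCover : ∀ e ∈ U, ∃ i ∈ Xε, e ∈ S i)
    (hLow : ∀ h : Fin k, (1 - ε) * f h * (Xε.card : ℝ) ≤
      ((Xε.filter (fun i => color i = h)).card : ℝ))
    (hHigh : ∀ h : Fin k, ((Xε.filter (fun i => color i = h)).card : ℝ) ≤
      (1 + ε) * f h * (Xε.card : ℝ))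
    (hInt : ∀ h : Fin k, ∃ m : ℕ, (1 + ε) * f h * (Xε.card : ℝ) = (m : ℝ))
    (hAvail : ∀ h : Fin k,
      (1 + ε) * f h * (Xε.card : ℝ) - ((Xε.filter (fun i => color i = h)).card : ℝ) ≤
        ((((Finset.univ.filter (fun i => color i = h)) \ Xε).card : ℕ) : ℝ))
    (Xstar : Finset ι) (hXstarCover : ∀ e ∈ U, ∃ i ∈ Xstar, e ∈ S i)
    (hXstarFair : ∀ h : Fin k,
      ((Xstar.filter (fun i => color i = h)).card : ℝ) = f h * (Xstar.card : ℝ))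
    (hXstarMin : ∀ D : Finset ι, (∀ e ∈ U, ∃ i ∈ D, e ∈ S i) →
      (∀ h : Fin k, ((D.filter (fun i => color i = h)).card : ℝ) = f h * (D.card : ℝ)) →
      Xstar.card ≤ D.card) :
    (∃ X' : Finset ι, Xε ⊆ X' ∧ (∀ e ∈ U, ∃ i ∈ X', e ∈ S i) ∧
      (∀ h : Fin k, ((X'.filter (fun i => color i = h)).card : ℝ) = f h * (X'.card : ℝ)) ∧
      (X'.card : ℝ) = (1 + ε) * (Xε.card : ℝ)) ∧
    (Xstar.card : ℝ) ≤ (1 + ε) * (Xε.card : ℝ) := by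
  classical
  choose m hm using hInt
  have hcm : ∀ h, (Xε.filter (fun i => color i = h)).card ≤ m h := by
    intro h
    have := hHigh h
    rw [hm h] at this
    exact_mod_cast this
  set d : Fin k → ℕ := fun h => m h - (Xε.filter (fun i => color i = h)).card with hd
  have hdcast : ∀ h, (d h : ℝ) = (m h : ℝ) - ((Xε.filter (fun i => color i = h)).card : ℝ) := by
    intro h
    simp only [hd]
    push_cast [hcm h]
    ring
  have hdle : ∀ h, d h ≤ (((Finset.univ.filter (fun i => color i = h)) \ Xε)).card := by
    intro h
    have h1 := hAvail h
    rw [hm h] at h1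
    have : (d h : ℝ) ≤ ((((Finset.univ.filter (fun i => color i = h)) \ Xε)).card : ℝ) := by
      rw [hdcast h]; linarith
    exact_mod_cast this
  choose T hTsub hTcard using fun h => Finset.exists_subset_card_eq (hdle h)
  set B : Finset ι := Finset.univ.biUnion T with hB
  have hTcolor : ∀ h, ∀ i ∈ T h, color i = h := by
    intro h i hi
    have := hTsub h hi
    simp only [Finset.mem_sdiff, Finset.mem_filter] at this
    exact this.1.2
  have hTXε : ∀ h, ∀ i ∈ T h, i ∉ Xε := by
    intro h i hi
    have := hTsub h hi
    simp only [Finset.mem_sdiff] at this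
    exact this.2
  have hBX : Disjoint Xε B := by
    rw [Finset.disjoint_right]
    intro i hi
    simp only [hB, Finset.mem_biUnion] at hi
    obtain ⟨h, _, hih⟩ := hi
    exact hTXε h i hih
  have hTdisj : ∀ h₁ ∈ (Finset.univ : Finset (Fin k)), ∀ h₂ ∈ (Finset.univ : Finset (Fin k)),
      h₁ ≠ h₂ → Disjoint (T h₁) (T h₂) := by
    intro h₁ _ h₂ _ hne
    rw [Finset.disjoint_left]
    intro i hi1 hi2
    exact hne ((hTcolor h₁ i hi1).symm.trans (hTcolor h₂ i hi2))
  set X' : Finset ι := Xε ∪ B with hX'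
  -- filter of X' at color h
  have hfilter : ∀ h, X'.filter (fun i => color i = h)
      = Xε.filter (fun i => color i = h) ∪ T h := by
    intro h
    ext i
    simp only [hX', hB, Finset.mem_filter, Finset.mem_union, Finset.mem_biUnion,
      Finset.mem_univ, true_and]
    constructor
    · rintro ⟨hi | ⟨h', hih'⟩, hc⟩
      · exact Or.inl ⟨hi, hc⟩
      · right
        rwa [← hc, hTcolor h' i hih']
    · rintro (⟨hi, hc⟩ | hi)
      · exact ⟨Or.inl hi, hc⟩
      · exact ⟨Or.inr ⟨h, hi⟩, hTcolor h i hi⟩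
  have hfiltercard : ∀ h, (X'.filter (fun i => color i = h)).card = m h := by
    intro h
    have hdisj : Disjoint (Xε.filter (fun i => color i = h)) (T h) := by
      rw [Finset.disjoint_left]
      intro i hi hiT
      exact hTXε h i hiT (Finset.mem_filter.mp hi).1
    rw [hfilter h, Finset.card_union_of_disjoint hdisj, hTcard h]
    exact Nat.add_sub_cancel' (hcm h)
  have hsumcur : ∑ h : Fin k, (Xε.filter (fun i => color i = h)).card = Xε.card := by
    exact (Finset.card_eq_sum_card_fiberwise (fun i _ => Finset.mem_univ (color i))).symm
  have hsumm : (∑ h : Fin k, (m h : ℝ)) = (1 + ε) * (Xε.card : ℝ) := by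
    calc (∑ h : Fin k, (m h : ℝ)) = ∑ h : Fin k, (1 + ε) * f h * (Xε.card : ℝ) := by
          exact Finset.sum_congr rfl (fun h _ => (hm h).symm)
      _ = (1 + ε) * (∑ h : Fin k, f h) * (Xε.card : ℝ) := by
          rw [Finset.mul_sum, Finset.sum_mul]
      _ = (1 + ε) * (Xε.card : ℝ) := by rw [hf1]; ring
  have hBcard : B.card = ∑ h : Fin k, d h := by
    rw [hB, Finset.card_biUnion hTdisj]
    exact Finset.sum_congr rfl (fun h _ => hTcard h)
  have hX'card : (X'.card : ℝ) = (1 + ε) * (Xε.card : ℝ) := by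
    rw [hX', Finset.card_union_of_disjoint hBX, hBcard]
    push_cast
    rw [Finset.sum_congr rfl (fun h (_ : h ∈ Finset.univ) => hdcast h), Finset.sum_sub_distrib,
      hsumm]
    have : (∑ h : Fin k, ((Xε.filter (fun i => color i = h)).card : ℝ)) = (Xε.card : ℝ) := by
      rw [← Nat.cast_sum, hsumcur]
    rw [this]; ring
  have hfair : ∀ h : Fin k, ((X'.filter (fun i => color i = h)).card : ℝ)
      = f h * (X'.card : ℝ) := by
    intro h
    rw [hfiltercard h, ← hm h, hX'card]
    ring
  have hsub : Xε ⊆ X' := Finset.subset_union_left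
  have hcov : ∀ e ∈ U, ∃ i ∈ X', e ∈ S i := by
    intro e he
    obtain ⟨i, hi, hei⟩ := hCover e he
    exact ⟨i, hsub hi, hei⟩
  refine ⟨⟨X', hsub, hcov, hfair, hX'card⟩, ?_⟩
  calc (Xstar.card : ℝ) ≤ (X'.card : ℝ) := by exact_mod_cast hXstarMin X' hcov hfair
    _ = (1 + ε) * (Xε.card : ℝ) := hX'card
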